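/- Let a ∈ ℍⁿ be a nonzero quaternion vector and v ∈ ℝⁿ a real vector with ‖v‖ = 1. Set α = ‖a‖, r = |∑ᵢ aᵢ vᵢ|, ζ = 1 if r = 0 and ζ = −(∑ᵢ aᵢ vᵢ)/r if r > 0, μ = √(α(α + r)), and define u ∈ ℍⁿ by uᵢ = (aᵢ − ζ vᵢ α)/μ. Then |ζ| = 1, ‖u‖ = √2, and for every index i, ζ⁻¹ * (aᵢ − uᵢ * (∑ⱼ (star uⱼ) * aⱼ)) = α vᵢ; i.e., this explicit construction realizes the left quaternion Householder transformation sending a to ‖a‖ v. -/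

import Mathlib

private lemma qcoe_sum {ι : Type*} (s : Finset ι) (f : ι → ℝ) :
    ((∑ i ∈ s, f i : ℝ) : Quaternion ℝ) = ∑ i ∈ s, ((f i : ℝ) : Quaternion ℝ) := by
  classical
  induction s using Finset.induction_on with
  | empty => simp
  | insert _ _ h ih => rw [Finset.sum_insert h, Finset.sum_insert h, Quaternion.coe_add, ih]

private lemma qcoe_ne_zero {x : ℝ} (h : x ≠ 0) : ((x : ℝ) : Quaternion ℝ) ≠ 0 := fun hc =>
  h (Quaternion.coe_injective (by simpa using hc))

private lemma qsmul_coe (x y : ℝ) :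
    x • ((y : ℝ) : Quaternion ℝ) = ((x * y : ℝ) : Quaternion ℝ) := by
  rw [← Quaternion.coe_mul_eq_smul, ← Quaternion.coe_mul]

/-- The explicit construction of the **left** quaternion Householder vector and scalar
(equations (10)–(14) of the paper): for a nonzero quaternion vector `a` and a real unit
vector `v`, the construction yields a unit quaternion `ζ` and a vector `u` of norm `√2`
such that `ζ⁻¹ (I - u ūᵀ) a = ‖a‖ v`. -/
theorem left_quaternion_householder_construction (n : ℕ) (a : Fin n → Quaternion ℝ)
    (ha : a ≠ 0) (v : Fin n → ℝ) (hv : Real.sqrt (∑ i, (v i) ^ 2) = 1)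
    (α : ℝ) (hα : α = Real.sqrt (∑ i, ‖a i‖ ^ 2))
    (r : ℝ) (hr : r = ‖∑ i, a i * ((v i : ℝ) : Quaternion ℝ)‖)
    (ζ : Quaternion ℝ)
    (hζ : ζ = if r = 0 then 1
      else -(∑ i, a i * ((v i : ℝ) : Quaternion ℝ)) / ((r : ℝ) : Quaternion ℝ))
    (μ : ℝ) (hμ : μ = Real.sqrt (α * (α + r)))
    (u : Fin n → Quaternion ℝ)
    (hu : ∀ i, u i =
      (a i - ζ * ((v i : ℝ) : Quaternion ℝ) * ((α : ℝ) : Quaternion ℝ)) / ((μ : ℝ) : Quaternion ℝ)) :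
    ‖ζ‖ = 1 ∧ Real.sqrt (∑ i, ‖u i‖ ^ 2) = Real.sqrt 2 ∧
      ∀ i, ζ⁻¹ * (a i - u i * (∑ j, star (u j) * a j)) =
        ((α : ℝ) : Quaternion ℝ) * ((v i : ℝ) : Quaternion ℝ) := by
  set s : Quaternion ℝ := ∑ i, a i * ((v i : ℝ) : Quaternion ℝ) with hs_def
  have hSnn : (0:ℝ) ≤ ∑ i, ‖a i‖ ^ 2 := Finset.sum_nonneg fun i _ => sq_nonneg _
  have hα2 : α ^ 2 = ∑ i, ‖a i‖ ^ 2 := by rw [hα]; exact Real.sq_sqrt hSnn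
  have hαpos : 0 < α := by
    rw [hα]
    apply Real.sqrt_pos.mpr
    obtain ⟨i, hi⟩ := Function.ne_iff.mp ha
    exact Finset.sum_pos' (fun j _ => sq_nonneg _)
      ⟨i, Finset.mem_univ i, pow_pos (norm_pos_iff.mpr hi) 2⟩
  have hr0 : 0 ≤ r := hr ▸ norm_nonneg _
  have hμ2 : μ ^ 2 = α * (α + r) := by rw [hμ]; exact Real.sq_sqrt (by nlinarith)
  have hμpos : 0 < μ := by rw [hμ]; exact Real.sqrt_pos.mpr (by nlinarith)
  have hμq : ((μ : ℝ) : Quaternion ℝ) ≠ 0 := qcoe_ne_zero hμpos.ne'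
  have hsz : s = -ζ * ((r : ℝ) : Quaternion ℝ) := by
    rw [hζ]
    split_ifs with h
    · have : s = 0 := norm_eq_zero.mp (by rw [← hr, h])
      simp [this, h]
    · rw [neg_div, neg_neg, div_mul_cancel₀ _ (qcoe_ne_zero h)]
  have hζnorm : ‖ζ‖ = 1 := by
    rw [hζ]
    split_ifs with h
    · simp
    · rw [norm_div, norm_neg, ← hr, Quaternion.norm_coe, Real.norm_eq_abs,
        abs_of_nonneg hr0, div_self h]
  have hζne : ζ ≠ 0 := by
    intro h; rw [h, norm_zero] at hζnorm; norm_num at hζnorm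
  have hζζ : star ζ * ζ = 1 := by
    rw [Quaternion.star_mul_self, Quaternion.normSq_eq_norm_mul_self, hζnorm]
    norm_num
  have hum : ∀ i, u i * ((μ : ℝ) : Quaternion ℝ)
      = a i - ζ * ((v i : ℝ) : Quaternion ℝ) * ((α : ℝ) : Quaternion ℝ) := fun i => by
    rw [hu i, div_mul_cancel₀ _ hμq]
  have hust : ∀ i, ((μ : ℝ) : Quaternion ℝ) * star (u i)
      = star (a i) - ((α : ℝ) : Quaternion ℝ) * ((v i : ℝ) : Quaternion ℝ) * star ζ := fun i => by
    have h1 := congrArg star (hum i)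
    rw [star_mul, Quaternion.star_coe, star_sub, star_mul, star_mul,
      Quaternion.star_coe, Quaternion.star_coe] at h1
    rw [h1]
    simp only [Quaternion.coe_mul_eq_smul, Quaternion.mul_coe_eq_smul, smul_mul_assoc,
      mul_smul_comm, smul_smul]
  have hAA : ∑ j, star (a j) * a j = ((α ^ 2 : ℝ) : Quaternion ℝ) := by
    have h1 : ∀ j, star (a j) * a j = ((‖a j‖ ^ 2 : ℝ) : Quaternion ℝ) := fun j => by
      rw [Quaternion.star_mul_self, Quaternion.normSq_eq_norm_mul_self, sq]
    rw [Finset.sum_congr rfl fun j _ => h1 j, ← qcoe_sum, ← hα2]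
  have hstζs : star ζ * s = -((r:ℝ) : Quaternion ℝ) := by
    rw [hsz, show star ζ * (-ζ * ((r:ℝ):Quaternion ℝ)) = -(star ζ * ζ * ((r:ℝ):Quaternion ℝ))
      by noncomm_ring, hζζ, one_mul]
  have hstsζ : star s * ζ = -((r:ℝ) : Quaternion ℝ) := by
    rw [hsz, star_mul, Quaternion.star_coe, star_neg]
    simp only [Quaternion.coe_mul_eq_smul, smul_mul_assoc, neg_mul, hζζ]
    simp [← Quaternion.coe_mul_eq_smul]
  -- star s and star ζ * s as sums
  have hss : star s * ζ = ∑ j, (v j) • (star (a j) * ζ) := by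
    rw [hs_def, star_sum, Finset.sum_mul]
    refine Finset.sum_congr rfl fun j _ => ?_
    rw [star_mul, Quaternion.star_coe, Quaternion.coe_mul_eq_smul, smul_mul_assoc]
  have hzs : star ζ * s = ∑ j, (v j) • (star ζ * a j) := by
    rw [hs_def, Finset.mul_sum]
    refine Finset.sum_congr rfl fun j _ => ?_
    rw [Quaternion.mul_coe_eq_smul, mul_smul_comm]
  -- the key scalar: ∑ star (u j) * a j = μ
  have hw : ∑ j, star (u j) * a j = ((μ:ℝ) : Quaternion ℝ) := by
    apply mul_left_cancel₀ hμq
    rw [Finset.mul_sum]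
    have h1 : ∀ j, ((μ:ℝ) : Quaternion ℝ) * (star (u j) * a j)
        = star (a j) * a j - (α * v j) • (star ζ * a j) := fun j => by
      rw [← mul_assoc, hust j, sub_mul]
      simp only [Quaternion.coe_mul_eq_smul, Quaternion.mul_coe_eq_smul, smul_mul_assoc,
        mul_smul_comm, smul_smul]
      module
    rw [Finset.sum_congr rfl fun j _ => h1 j, Finset.sum_sub_distrib, hAA]
    have h2 : ∑ j, (α * v j) • (star ζ * a j) = α • (star ζ * s) := by
      rw [hzs, Finset.smul_sum]
      exact Finset.sum_congr rfl fun j _ => (smul_smul α (v j) _).symm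
    rw [h2, hstζs, smul_neg, qsmul_coe, sub_neg_eq_add, ← Quaternion.coe_mul, ← Quaternion.coe_add]
    congr 1
    rw [show μ * μ = μ ^ 2 by ring, hμ2]; ring
  refine ⟨hζnorm, ?_, ?_⟩
  · -- ‖u‖ = √2
    have hv2 : ∑ i, (v i) ^ 2 = 1 := by
      have h := congrArg (· ^ 2) hv
      simpa [Real.sq_sqrt (Finset.sum_nonneg fun i (_ : i ∈ Finset.univ) => sq_nonneg (v i))] using h
    have key : ∀ j, ((μ:ℝ) : Quaternion ℝ) * (star (u j) * u j) * ((μ:ℝ) : Quaternion ℝ)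
        = star (a j) * a j - (α * v j) • (star (a j) * ζ) - (α * v j) • (star ζ * a j)
          + (α ^ 2 * (v j) ^ 2) • (star ζ * ζ) := fun j => by
      rw [← mul_assoc, hust j, mul_assoc, hum j]
      simp only [sub_mul, mul_sub, star_sub, star_mul, Quaternion.star_coe,
        Quaternion.coe_mul_eq_smul, Quaternion.mul_coe_eq_smul, smul_mul_assoc,
        mul_smul_comm, smul_smul]
      module
    have hsum : ∑ j, ((μ:ℝ) : Quaternion ℝ) * (star (u j) * u j) * ((μ:ℝ) : Quaternion ℝ)
        = ((2 * μ ^ 2 : ℝ) : Quaternion ℝ) := by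
      rw [Finset.sum_congr rfl fun j _ => key j]
      rw [Finset.sum_add_distrib, Finset.sum_sub_distrib, Finset.sum_sub_distrib, hAA]
      have h2 : ∑ j, (α * v j) • (star ζ * a j) = α • (star ζ * s) := by
        rw [hzs, Finset.smul_sum]
        exact Finset.sum_congr rfl fun j _ => (smul_smul α (v j) _).symm
      have h3 : ∑ j, (α * v j) • (star (a j) * ζ) = α • (star s * ζ) := by
        rw [hss, Finset.smul_sum]
        exact Finset.sum_congr rfl fun j _ => (smul_smul α (v j) _).symm
      have h4 : ∑ j, (α ^ 2 * (v j) ^ 2) • (star ζ * ζ) = ((α ^ 2 : ℝ) : Quaternion ℝ) := by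
        rw [← Finset.sum_smul, ← Finset.mul_sum, hv2, mul_one, hζζ]
        simp [← Quaternion.coe_mul_eq_smul]
      rw [h2, h3, h4, hstζs, hstsζ, smul_neg, qsmul_coe, sub_neg_eq_add,
        sub_neg_eq_add, ← Quaternion.coe_add, ← Quaternion.coe_add, ← Quaternion.coe_add]
      congr 1
      rw [hμ2]; ring
    have hreal : μ ^ 2 * ∑ j, ‖u j‖ ^ 2 = 2 * μ ^ 2 := by
      apply Quaternion.coe_injective
      rw [← hsum, Finset.mul_sum, qcoe_sum]
      refine (Finset.sum_congr rfl fun j _ => ?_).symm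
      rw [Quaternion.star_mul_self, Quaternion.normSq_eq_norm_mul_self, ← sq,
        ← Quaternion.coe_mul, ← Quaternion.coe_mul]
      congr 1
      ring
    have : ∑ j, ‖u j‖ ^ 2 = 2 := by
      have hμ2ne : μ ^ 2 ≠ 0 := pow_ne_zero 2 hμpos.ne'
      exact mul_left_cancel₀ hμ2ne (hreal.trans (by ring))
    rw [this]
  · intro i
    rw [hw, hum i, sub_sub_cancel, ← mul_assoc, ← mul_assoc, inv_mul_cancel₀ hζne, one_mul,
      Quaternion.coe_commutes]
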